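/- Let A_φ be an n×n real matrix, U, V ∈ R^n, r ≥ 0, and suppose there exists P = Pᵀ ≻ 0 such that the block matrix [[A_φᵀP + PA_φ, PU, rV], [UᵀP, -1, 0], [rVᵀ, 0, -1]] is negative definite. Then for every complex scalar δ with |δ| ≤ r, the matrix A_φ - δ·U·Vᵀ has all eigenvalues with strictly negative real part. -/

import Mathlib

open Matrix Complex

noncomputable section

def cplx {n : ℕ} (M : Matrix (Fin n) (Fin n) ℝ) : Matrix (Fin n) (Fin n) ℂ :=
  M.map (fun x => (x : ℂ))

def cvec {n : ℕ} (v : Fin n → ℝ) : Fin n → ℂ := fun i => (v i : ℂ)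

lemma quad_re {n : ℕ} (N : Matrix (Fin n) (Fin n) ℝ) (v : Fin n → ℂ) :
    (star v ⬝ᵥ (cplx N *ᵥ v)).re =
      (fun i => (v i).re) ⬝ᵥ (N *ᵥ fun i => (v i).re)
        + (fun i => (v i).im) ⬝ᵥ (N *ᵥ fun i => (v i).im) := by
  simp only [dotProduct, mulVec, cplx, Matrix.map_apply, Pi.star_apply, Finset.mul_sum,
    re_sum, ← Finset.sum_add_distrib]
  refine Finset.sum_congr rfl fun i _ => ?_
  simp only [Complex.mul_re, Complex.mul_im, re_sum, im_sum, Finset.sum_mul, Finset.mul_sum,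
    ← Finset.sum_add_distrib, ← Finset.sum_sub_distrib]
  refine Finset.sum_congr rfl fun j _ => ?_
  simp only [Complex.mul_re, Complex.mul_im, Complex.ofReal_re, Complex.ofReal_im,
    RCLike.star_def, Complex.conj_re, Complex.conj_im]
  ring

lemma quad_im {n : ℕ} (N : Matrix (Fin n) (Fin n) ℝ) (v : Fin n → ℂ) :
    (star v ⬝ᵥ (cplx N *ᵥ v)).im =
      (fun i => (v i).re) ⬝ᵥ (N *ᵥ fun i => (v i).im)
        - (fun i => (v i).im) ⬝ᵥ (N *ᵥ fun i => (v i).re) := by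
  simp only [dotProduct, mulVec, cplx, Matrix.map_apply, Pi.star_apply, Finset.mul_sum,
    im_sum, ← Finset.sum_sub_distrib]
  refine Finset.sum_congr rfl fun i _ => ?_
  simp only [Complex.mul_re, Complex.mul_im, re_sum, im_sum, Finset.sum_mul, Finset.mul_sum,
    ← Finset.sum_sub_distrib, ← Finset.sum_add_distrib]
  refine Finset.sum_congr rfl fun j _ => ?_
  simp only [Complex.mul_re, Complex.mul_im, Complex.ofReal_re, Complex.ofReal_im,
    RCLike.star_def, Complex.conj_re, Complex.conj_im]
  ring

lemma cvec_dot {n : ℕ} (w : Fin n → ℝ) (v : Fin n → ℂ) :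
    star v ⬝ᵥ cvec w = starRingEnd ℂ (cvec w ⬝ᵥ v) := by
  simp only [dotProduct, cvec, Pi.star_apply, map_sum]
  refine Finset.sum_congr rfl fun i _ => ?_
  simp [mul_comm, RingHom.map_mul, Complex.conj_ofReal]

lemma cplx_mulVec_cvec {n : ℕ} (M : Matrix (Fin n) (Fin n) ℝ) (w : Fin n → ℝ) :
    cplx M *ᵥ cvec w = cvec (M *ᵥ w) := by
  funext i
  simp [cplx, cvec, mulVec, dotProduct]

lemma cplx_mul {n : ℕ} (A B : Matrix (Fin n) (Fin n) ℝ) :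
    cplx (A * B) = cplx A * cplx B := by
  have : cplx (A * B) = (A * B).map (Complex.ofRealHom) := rfl
  rw [this, Matrix.map_mul]; rfl

lemma cvec_re {n : ℕ} (w : Fin n → ℝ) (v : Fin n → ℂ) :
    (cvec w ⬝ᵥ v).re = w ⬝ᵥ (fun i => (v i).re) := by
  simp [dotProduct, cvec, re_sum, Complex.mul_re]

lemma cvec_im {n : ℕ} (w : Fin n → ℝ) (v : Fin n → ℂ) :
    (cvec w ⬝ᵥ v).im = w ⬝ᵥ (fun i => (v i).im) := by
  simp [dotProduct, cvec, im_sum, Complex.mul_im]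

lemma vecMulVec_mulVec' {n : ℕ} (a b v : Fin n → ℂ) :
    vecMulVec a b *ᵥ v = (b ⬝ᵥ v) • a := by
  funext i
  simp [vecMulVec_apply, mulVec, dotProduct, Finset.mul_sum, mul_comm, mul_assoc, Finset.sum_mul]
  rw [show (∑ j, a i * (b j * v j)) = ∑ j, v j * (a i * b j) from
    Finset.sum_congr rfl fun j _ => by ring]

lemma lmi_key {n : ℕ} (Aφ : Matrix (Fin n) (Fin n) ℝ) (U V : Fin n → ℝ) (r : ℝ)
    (P : Matrix (Fin n) (Fin n) ℝ)
    (M12 : Matrix (Fin n) (Fin 2) ℝ)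
    (hM12 : ∀ i j, M12 i j = if j = 0 then (P *ᵥ U) i else r * V i)
    (hLMI : (-(Matrix.fromBlocks (Aφᵀ * P + P * Aφ) M12 M12ᵀ
        (-(1 : Matrix (Fin 2) (Fin 2) ℝ)))).PosDef)
    (x : Fin n → ℝ) (hx : x ≠ 0) :
    x ⬝ᵥ ((Aφᵀ * P + P * Aφ) *ᵥ x) + ((P *ᵥ U) ⬝ᵥ x)^2 + r^2 * (V ⬝ᵥ x)^2 < 0 := by
  set a : ℝ := (P *ᵥ U) ⬝ᵥ x with ha
  set b : ℝ := V ⬝ᵥ x with hb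
  set y : Fin 2 → ℝ := fun j => if j = 0 then a else r * b with hy
  have hw : Sum.elim x y ≠ 0 := by
    intro h
    exact hx (funext fun i => congrFun h (Sum.inl i))
  have hq := hLMI.dotProduct_mulVec_pos hw
  rw [star_trivial] at hq
  rw [neg_mulVec, dotProduct_neg, fromBlocks_mulVec, sumElim_dotProduct_sumElim] at hq
  simp only [Sum.elim_comp_inl, Sum.elim_comp_inr] at hq
  have hMy : M12 *ᵥ y = a • (P *ᵥ U) + (r * (r * b)) • V := by
    funext i
    simp only [mulVec, dotProduct, Fin.sum_univ_two, hM12, hy, Pi.add_apply, Pi.smul_apply,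
      smul_eq_mul]
    norm_num
    ring
  have hMx : M12ᵀ *ᵥ x = y := by
    funext j
    by_cases hj : j = 0
    · subst hj
      simp only [mulVec, dotProduct, transpose_apply, hM12, hy, if_pos rfl]
      rw [ha]
      rfl
    · simp only [mulVec, dotProduct, transpose_apply, hM12, hy, if_neg hj]
      rw [hb, dotProduct, Finset.mul_sum]
      exact Finset.sum_congr rfl fun i _ => by ring
  have h1 : x ⬝ᵥ (M12 *ᵥ y) = a * a + r * (r * b) * b := by
    rw [hMy, dotProduct_add, dotProduct_smul, dotProduct_smul, smul_eq_mul, smul_eq_mul,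
      dotProduct_comm x (P *ᵥ U), dotProduct_comm x V, ← ha, ← hb]
  have h2 : y ⬝ᵥ (M12ᵀ *ᵥ x + (-1 : Matrix (Fin 2) (Fin 2) ℝ) *ᵥ y) = 0 := by
    rw [hMx, neg_mulVec, one_mulVec, dotProduct_add, dotProduct_neg, add_neg_cancel]
  rw [dotProduct_add, h1, h2, add_zero] at hq
  nlinarith [hq]

/-- Bounded-real-lemma LMI certificate: if the block matrix
`[[AᵀP + PA, PU, rV], [UᵀP, -1, 0], [rVᵀ, 0, -1]]` is negative definite, then
`A_φ - δ U Vᵀ` is Hurwitz for every complex `δ` with `|δ| ≤ r`. -/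
theorem stmt15 {n : ℕ} (Aφ : Matrix (Fin n) (Fin n) ℝ) (U V : Fin n → ℝ) (r : ℝ)
    (hr : 0 ≤ r) (P : Matrix (Fin n) (Fin n) ℝ) (hP : P.PosDef) (hPsymm : P.IsSymm)
    (M12 : Matrix (Fin n) (Fin 2) ℝ)
    (hM12 : ∀ i j, M12 i j = if j = 0 then (P *ᵥ U) i else r * V i)
    (hLMI : (-(Matrix.fromBlocks (Aφᵀ * P + P * Aφ) M12 M12ᵀ
        (-(1 : Matrix (Fin 2) (Fin 2) ℝ)))).PosDef) :
    ∀ δ : ℂ, ‖δ‖ ≤ r →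
      ∀ z ∈ spectrum ℂ (cplx Aφ - δ • vecMulVec (cvec U) (cvec V)), z.re < 0 := by
  intro δ hδ z hz
  -- extract an eigenvector
  obtain ⟨v, hv0, hv⟩ : ∃ v : Fin n → ℂ, v ≠ 0 ∧
      (cplx Aφ - δ • vecMulVec (cvec U) (cvec V)) *ᵥ v = z • v := by
    rw [spectrum.mem_iff, Matrix.isUnit_iff_isUnit_det, isUnit_iff_ne_zero, not_not] at hz
    obtain ⟨v, hv0, hv⟩ := (Matrix.exists_mulVec_eq_zero_iff (A := ℂ)).mpr hz
    refine ⟨v, hv0, ?_⟩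
    have halg : (algebraMap ℂ (Matrix (Fin n) (Fin n) ℂ) z) *ᵥ v = z • v := by
      simp only [Matrix.algebraMap_eq_diagonal]
      funext i
      simp [mulVec_diagonal, Pi.algebraMap_apply, Algebra.algebraMap_self_apply]
    rw [sub_mulVec, halg, sub_eq_zero] at hv
    exact hv.symm
  set x : Fin n → ℝ := fun i => (v i).re with hxdef
  set y : Fin n → ℝ := fun i => (v i).im with hydef
  have hxy : x ≠ 0 ∨ y ≠ 0 := by
    by_contra h
    push_neg at h
    apply hv0
    funext i
    have h1 := congrFun h.1 i
    have h2 := congrFun h.2 i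
    simp only [hxdef, hydef, Pi.zero_apply] at h1 h2
    exact Complex.ext h1 h2
  set Qr : Matrix (Fin n) (Fin n) ℝ := Aφᵀ * P + P * Aφ with hQr
  -- positivity of the P-quadratic form
  have hxP : (0:ℝ) ≤ x ⬝ᵥ (P *ᵥ x) := by
    by_cases hx : x = 0
    · simp [hx]
    · have := hP.dotProduct_mulVec_pos hx
      rw [star_trivial] at this
      exact this.le
  have hyP : (0:ℝ) ≤ y ⬝ᵥ (P *ᵥ y) := by
    by_cases hy : y = 0
    · simp [hy]
    · have := hP.dotProduct_mulVec_pos hy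
      rw [star_trivial] at this
      exact this.le
  have hp : 0 < x ⬝ᵥ (P *ᵥ x) + y ⬝ᵥ (P *ᵥ y) := by
    rcases hxy with hx | hy
    · have := hP.dotProduct_mulVec_pos hx; rw [star_trivial] at this; linarith
    · have := hP.dotProduct_mulVec_pos hy; rw [star_trivial] at this; linarith
  set p : ℝ := x ⬝ᵥ (P *ᵥ x) + y ⬝ᵥ (P *ᵥ y) with hpdef
  set γ : ℂ := cvec (P *ᵥ U) ⬝ᵥ v with hγ
  set β : ℂ := cvec V ⬝ᵥ v with hβ
  set q : ℝ := x ⬝ᵥ (Qr *ᵥ x) + y ⬝ᵥ (Qr *ᵥ y) with hqdef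
  -- the key strict inequality from the LMI
  have habs_γ : (‖γ‖)^2 = ((P *ᵥ U) ⬝ᵥ x)^2 + ((P *ᵥ U) ⬝ᵥ y)^2 := by
    rw [Complex.sq_norm, Complex.normSq_apply, hγ, cvec_re, cvec_im, ← hxdef, ← hydef]
    ring
  have habs_β : (‖β‖)^2 = (V ⬝ᵥ x)^2 + (V ⬝ᵥ y)^2 := by
    rw [Complex.sq_norm, Complex.normSq_apply, hβ, cvec_re, cvec_im, ← hxdef, ← hydef]
    ring
  have hkey : q + (‖γ‖)^2 + r^2 * (‖β‖)^2 < 0 := by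
    rw [habs_γ, habs_β, hqdef]
    rcases hxy with hx | hy
    · have h1 := lmi_key Aφ U V r P M12 hM12 hLMI x hx
      by_cases hy : y = 0
      · simp only [hy, zero_dotProduct, dotProduct_zero]
        simpa using h1
      · have h2 := lmi_key Aφ U V r P M12 hM12 hLMI y hy
        linarith [h1, h2]
    · have h2 := lmi_key Aφ U V r P M12 hM12 hLMI y hy
      by_cases hx : x = 0
      · simp only [hx, zero_dotProduct, dotProduct_zero]
        simpa using h2
      · have h1 := lmi_key Aφ U V r P M12 hM12 hLMI x hx
        linarith [h1, h2]
  -- the quadratic form of P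
  set pc : ℂ := star v ⬝ᵥ (cplx P *ᵥ v) with hpc
  have hpcre : pc.re = p := by
    rw [hpc, quad_re, ← hxdef, ← hydef, hpdef]
  have hpcim : pc.im = 0 := by
    rw [hpc, quad_im, ← hxdef, ← hydef]
    have hxy' : x ⬝ᵥ (P *ᵥ y) = y ⬝ᵥ (P *ᵥ x) := by
      calc x ⬝ᵥ (P *ᵥ y) = (x ᵥ* P) ⬝ᵥ y := dotProduct_mulVec x P y
        _ = (Pᵀ *ᵥ x) ⬝ᵥ y := by rw [mulVec_transpose]
        _ = (P *ᵥ x) ⬝ᵥ y := by rw [hPsymm.eq]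
        _ = y ⬝ᵥ (P *ᵥ x) := dotProduct_comm _ _
    rw [hxy', sub_self]
  set t : ℂ := star v ⬝ᵥ (cplx (P * Aφ) *ᵥ v) with ht
  have h2t : 2 * t.re = q := by
    rw [ht, quad_re, ← hxdef, ← hydef, hqdef, hQr]
    have hsym : ∀ w : Fin n → ℝ, w ⬝ᵥ ((Aφᵀ * P) *ᵥ w) = w ⬝ᵥ ((P * Aφ) *ᵥ w) := by
      intro w
      calc w ⬝ᵥ ((Aφᵀ * P) *ᵥ w) = (w ᵥ* (Aφᵀ * P)) ⬝ᵥ w := dotProduct_mulVec _ _ _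
        _ = ((Aφᵀ * P)ᵀ *ᵥ w) ⬝ᵥ w := by rw [mulVec_transpose]
        _ = ((P * Aφ) *ᵥ w) ⬝ᵥ w := by rw [transpose_mul, transpose_transpose, hPsymm.eq]
        _ = w ⬝ᵥ ((P * Aφ) *ᵥ w) := dotProduct_comm _ _
    rw [add_mulVec, dotProduct_add, add_mulVec, dotProduct_add, hsym x, hsym y]
    ring
  have hs : z * pc = t - (δ * β) * (starRingEnd ℂ γ) := by
    have h1 : (cplx Aφ - δ • vecMulVec (cvec U) (cvec V)) *ᵥ v
        = cplx Aφ *ᵥ v - (δ * β) • cvec U := by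
      rw [sub_mulVec, smul_mulVec, vecMulVec_mulVec', smul_smul, ← hβ]
    calc z * pc = star v ⬝ᵥ (cplx P *ᵥ (z • v)) := by
          rw [mulVec_smul, dotProduct_smul, smul_eq_mul, hpc]
      _ = star v ⬝ᵥ (cplx P *ᵥ ((cplx Aφ - δ • vecMulVec (cvec U) (cvec V)) *ᵥ v)) := by
          rw [hv]
      _ = star v ⬝ᵥ (cplx P *ᵥ (cplx Aφ *ᵥ v - (δ * β) • cvec U)) := by rw [h1]
      _ = t - (δ * β) * (starRingEnd ℂ γ) := by
          rw [mulVec_sub, mulVec_smul, mulVec_mulVec, ← cplx_mul, cplx_mulVec_cvec,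
            dotProduct_sub, dotProduct_smul, smul_eq_mul, cvec_dot, ht, hγ]
  have hre : z.re * p = t.re - ((δ * β) * starRingEnd ℂ γ).re := by
    have hcongr := congrArg Complex.re hs
    rwa [Complex.mul_re, hpcre, hpcim, mul_zero, sub_zero, Complex.sub_re] at hcongr
  have hb1 : |((δ * β) * starRingEnd ℂ γ).re| ≤ r * ‖β‖ * ‖γ‖ := by
    refine (Complex.abs_re_le_norm _).trans ?_
    rw [norm_mul, norm_mul, Complex.norm_conj]
    exact mul_le_mul_of_nonneg_right
      (mul_le_mul_of_nonneg_right hδ (norm_nonneg _)) (norm_nonneg _)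
  have hamgm : 2 * (r * ‖β‖ * ‖γ‖)
      ≤ (‖γ‖)^2 + r^2 * (‖β‖)^2 := by
    nlinarith [sq_nonneg (‖γ‖ - r * ‖β‖)]
  have hX := (abs_le.mp hb1).1
  have hfinal : 2 * (z.re * p) < 0 := by linarith
  by_contra hcon
  push_neg at hcon
  nlinarith [mul_nonneg hcon hp.le]
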